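/- Let E = (C₂)^n with generators σ₁,…,σₙ, set ρᵢ = σᵢ − 1 ∈ F₂E, and let P = ⊕ F₂E·aᵢ with ψ(aᵢ) = ρᵢ. Then the F₂E-submodule W of ker ψ generated by the elements ρᵢaᵢ (1 ≤ i ≤ n) and ρⱼaᵢ + ρᵢaⱼ (1 ≤ i < j ≤ n) equals ker ψ. -/

import Mathlib

set_option maxHeartbeats 1000000
set_option synthInstance.maxHeartbeats 400000

/-- The elementary abelian `2`-group of rank `n`. -/
abbrev Egrp (n : ℕ) : Type := Multiplicative (Fin n → ZMod 2)

/-- The group algebra `F₂E`. -/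
abbrev F2E (n : ℕ) : Type := MonoidAlgebra (ZMod 2) (Egrp n)

/-- The generator `σᵢ` of `E` inside the group algebra. -/
noncomputable abbrev sigmaE (n : ℕ) (i : Fin n) : F2E n :=
  MonoidAlgebra.of (ZMod 2) (Egrp n) (Multiplicative.ofAdd (Pi.single i 1))

/-- `ρᵢ = σᵢ - 1`. -/
noncomputable abbrev rhoE (n : ℕ) (i : Fin n) : F2E n := sigmaE n i - 1

/-- The augmentation map `F₂E → F₂`, sending every group element to `1`. -/
noncomputable abbrev augE (n : ℕ) : F2E n →ₐ[ZMod 2] ZMod 2 :=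
  MonoidAlgebra.lift (ZMod 2) (ZMod 2) (Egrp n) 1

/-! Auxiliary definitions and lemmas. -/

lemma F2E.char2 (n : ℕ) (x : F2E n) : x + x = 0 := by
  have h : x + x = (2 : ZMod 2) • x := by rw [two_smul]
  rw [h, show (2 : ZMod 2) = 0 by decide, zero_smul]

lemma F2E.neg_eq (n : ℕ) (x : F2E n) : -x = x :=
  neg_eq_of_add_eq_zero_left (F2E.char2 n x)

lemma F2E.pchar2 (n : ℕ) (x : Fin n → F2E n) : x + x = 0 := by
  funext j; exact F2E.char2 n (x j)

lemma rho_eq_add (n : ℕ) (i : Fin n) : rhoE n i = sigmaE n i + 1 := by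
  rw [rhoE, sub_eq_add_neg, F2E.neg_eq]

lemma sigma_eq_rho_add (n : ℕ) (i : Fin n) : sigmaE n i = rhoE n i + 1 := by
  rw [rho_eq_add]
  rw [add_assoc, F2E.char2, add_zero]

lemma sigma_sq (n : ℕ) (i : Fin n) : sigmaE n i * sigmaE n i = 1 := by
  rw [sigmaE, ← map_mul]
  have h1 : (Multiplicative.ofAdd (Pi.single i 1) * Multiplicative.ofAdd (Pi.single i 1)
      : Egrp n) = 1 := by
    rw [← ofAdd_add]
    have h2 : (Pi.single i 1 + Pi.single i 1 : Fin n → ZMod 2) = 0 := by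
      ext j; by_cases h : j = i <;> simp [h, Pi.single_apply]; decide
    rw [h2]; rfl
  rw [h1, map_one]

lemma rho_sq (n : ℕ) (i : Fin n) : rhoE n i * rhoE n i = 0 := by
  have h : rhoE n i * rhoE n i = sigmaE n i * sigmaE n i + 1 + (sigmaE n i + sigmaE n i) := by
    rw [rho_eq_add]; ring
  rw [h, sigma_sq, F2E.char2, zero_add, F2E.char2]

/-- The product `ρ_T := ∏_{i ∈ T} ρᵢ`. -/
noncomputable def rhoP (n : ℕ) (T : Finset (Fin n)) : F2E n := ∏ i ∈ T, rhoE n i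

/-- The group element `σ_T = ∏_{i ∈ T} σᵢ`. -/
noncomputable def gSel (n : ℕ) (T : Finset (Fin n)) : Egrp n :=
  Multiplicative.ofAdd (∑ i ∈ T, Pi.single i (1 : ZMod 2))

lemma gSel_apply (n : ℕ) (T : Finset (Fin n)) (j : Fin n) :
    Multiplicative.toAdd (gSel n T) j = if j ∈ T then 1 else 0 := by
  simp only [gSel, toAdd_ofAdd]
  rw [Finset.sum_apply]
  simp [Pi.single_apply, Finset.sum_ite_eq' T j fun _ => (1 : ZMod 2)]

lemma gSel_inj (n : ℕ) : Function.Injective (gSel n) := by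
  intro S T h
  ext j
  have h2 : Multiplicative.toAdd (gSel n S) j = Multiplicative.toAdd (gSel n T) j := by rw [h]
  rw [gSel_apply, gSel_apply] at h2
  by_cases hS : j ∈ S <;> by_cases hT : j ∈ T <;>
    simp only [hS, hT, if_true, if_false, iff_true, iff_false] at h2 ⊢ <;>
    first
    | trivial
    | exact one_ne_zero h2
    | exact one_ne_zero h2.symm

lemma gSel_surj (n : ℕ) : Function.Surjective (gSel n) := by
  intro g
  refine ⟨Finset.univ.filter (fun i => Multiplicative.toAdd g i = 1), ?_⟩
  have key : ∀ x : ZMod 2, x = 0 ∨ x = 1 := by decide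
  apply Multiplicative.toAdd.injective
  funext j
  rw [gSel_apply]
  rcases key (Multiplicative.toAdd g j) with h | h <;> simp [h]

lemma sigma_prod (n : ℕ) (T : Finset (Fin n)) :
    (∏ i ∈ T, sigmaE n i) = MonoidAlgebra.single (gSel n T) 1 := by
  rw [← map_prod (MonoidAlgebra.of (ZMod 2) (Egrp n)) _ T]
  rw [MonoidAlgebra.of_apply]
  congr 1

lemma rhoP_expand (n : ℕ) (T : Finset (Fin n)) :
    rhoP n T = ∑ S ∈ T.powerset, MonoidAlgebra.single (gSel n S) 1 := by
  have h : rhoP n T = ∏ i ∈ T, (sigmaE n i + 1) := by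
    apply Finset.prod_congr rfl
    intro i _
    rw [rho_eq_add]
  rw [h, Finset.prod_add]
  apply Finset.sum_congr rfl
  intro S _
  rw [Finset.prod_const_one, mul_one, sigma_prod]

lemma single_expand (n : ℕ) (T : Finset (Fin n)) :
    (MonoidAlgebra.single (gSel n T) 1 : F2E n) = ∑ S ∈ T.powerset, rhoP n S := by
  have h : (MonoidAlgebra.single (gSel n T) 1 : F2E n) = ∏ i ∈ T, (rhoE n i + 1) := by
    rw [← sigma_prod]
    apply Finset.prod_congr rfl
    intro i _
    rw [sigma_eq_rho_add]
  rw [h, Finset.prod_add]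
  apply Finset.sum_congr rfl
  intro S _
  rw [Finset.prod_const_one, mul_one, rhoP]

lemma rhoP_apply (n : ℕ) (T S₀ : Finset (Fin n)) :
    (rhoP n T).coeff (gSel n S₀) = if S₀ ⊆ T then 1 else 0 := by
  rw [rhoP_expand]
  rw [MonoidAlgebra.coeff_sum, Finsupp.finset_sum_apply]
  have h : ∀ S ∈ T.powerset,
      (MonoidAlgebra.single (gSel n S) (1 : ZMod 2)).coeff (gSel n S₀) = if S = S₀ then 1 else 0 := by
    intro S _
    rw [MonoidAlgebra.coeff_single, Finsupp.single_apply]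
    congr 1
    simp only [eq_iff_iff]
    exact ⟨fun h => gSel_inj n h, fun h => by rw [h]⟩
  rw [Finset.sum_congr rfl h, Finset.sum_ite_eq' T.powerset S₀ (fun _ => (1 : ZMod 2))]
  simp [Finset.mem_powerset]

/-- The products `ρ_T` are linearly independent over `F₂`. -/
lemma rhoP_indep (n : ℕ) (c : Finset (Fin n) → ZMod 2)
    (h : ∑ T : Finset (Fin n), c T • rhoP n T = 0) : ∀ T, c T = 0 := by
  by_contra hc
  push_neg at hc
  set 𝒯 : Finset (Finset (Fin n)) := Finset.univ.filter (fun T => c T ≠ 0) with h𝒯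
  have hne : 𝒯.Nonempty := by
    obtain ⟨T, hT⟩ := hc
    exact ⟨T, by simp [h𝒯, hT]⟩
  obtain ⟨S₀, hS₀mem, hS₀max⟩ := Finset.exists_max_image 𝒯 Finset.card hne
  have hcS₀ : c S₀ ≠ 0 := by simpa [h𝒯] using hS₀mem
  have hev : (∑ T : Finset (Fin n), c T • rhoP n T).coeff (gSel n S₀) = 0 := by rw [h]; rfl
  rw [MonoidAlgebra.coeff_sum, Finsupp.finset_sum_apply] at hev
  have h2 : ∀ T ∈ (Finset.univ : Finset (Finset (Fin n))),
      (c T • rhoP n T).coeff (gSel n S₀) = if S₀ ⊆ T then c T else 0 := by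
    intro T _
    rw [MonoidAlgebra.coeff_smul, Finsupp.smul_apply, rhoP_apply]
    by_cases hsub : S₀ ⊆ T <;> simp [hsub]
  rw [Finset.sum_congr rfl h2, ← Finset.sum_filter] at hev
  have h3 : ∑ T ∈ Finset.univ.filter (fun T => S₀ ⊆ T), c T = c S₀ := by
    apply Finset.sum_eq_single S₀
    · intro T hT hTne
      by_contra hcT
      have hT𝒯 : T ∈ 𝒯 := by simp [h𝒯, hcT]
      have hsub : S₀ ⊆ T := (Finset.mem_filter.mp hT).2
      have hcard : T.card ≤ S₀.card := hS₀max T hT𝒯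
      exact hTne (Finset.eq_of_subset_of_card_le hsub hcard).symm
    · intro habs
      exact absurd (by simp : S₀ ∈ Finset.univ.filter (fun T => S₀ ⊆ T)) habs
  rw [h3] at hev
  exact hcS₀ hev

/-- The generating set of the submodule `W`. -/
def genSet (n : ℕ) : Set (Fin n → F2E n) :=
  {x : Fin n → F2E n | ∃ i : Fin n, x = rhoE n i • (Pi.single i 1 : Fin n → F2E n)} ∪
  {x : Fin n → F2E n | ∃ i j : Fin n, i < j ∧
     x = rhoE n j • (Pi.single i 1 : Fin n → F2E n) +
         rhoE n i • (Pi.single j 1 : Fin n → F2E n)}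

/-- The submodule `W`. -/
noncomputable def Wmod (n : ℕ) : Submodule (F2E n) (Fin n → F2E n) :=
  Submodule.span (F2E n) (genSet n)

lemma swap_mem_W (n : ℕ) (i j : Fin n) (hij : i ≠ j) :
    rhoE n j • (Pi.single i 1 : Fin n → F2E n) + rhoE n i • (Pi.single j 1 : Fin n → F2E n)
      ∈ Wmod n := by
  rcases hij.lt_or_gt with h | h
  · exact Submodule.subset_span (Or.inr ⟨i, j, h, rfl⟩)
  · rw [add_comm]
    exact Submodule.subset_span (Or.inr ⟨j, i, h, rfl⟩)

/-- The canonical representative `m_T = ρ_{T \ min T} • e_{min T}`. -/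
noncomputable def mT (n : ℕ) (T : Finset (Fin n)) : Fin n → F2E n :=
  if h : T.Nonempty then
    rhoP n (T.erase (T.min' h)) • (Pi.single (T.min' h) 1 : Fin n → F2E n)
  else 0

/-- Each `ρ_S • eᵢ` lies in `W + span_{F₂} {m_T}`. -/
lemma rhoP_smul_single_mem (n : ℕ) (S : Finset (Fin n)) (i : Fin n) :
    rhoP n S • (Pi.single i 1 : Fin n → F2E n) ∈
      (Wmod n).restrictScalars (ZMod 2) ⊔ Submodule.span (ZMod 2) (Set.range (mT n)) := by
  by_cases hi : i ∈ S
  · apply Submodule.mem_sup_left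
    have h : rhoP n S • (Pi.single i 1 : Fin n → F2E n)
        = rhoP n (S.erase i) • (rhoE n i • (Pi.single i 1 : Fin n → F2E n)) := by
      rw [smul_smul]
      congr 1
      rw [rhoP, rhoP, Finset.prod_erase_mul _ _ hi]
    rw [Submodule.restrictScalars_mem, h]
    exact Submodule.smul_mem _ _ (Submodule.subset_span (Or.inl ⟨i, rfl⟩))
  · set T : Finset (Fin n) := insert i S with hT
    have hne : T.Nonempty := ⟨i, Finset.mem_insert_self i S⟩
    set j : Fin n := T.min' hne with hj
    have hjT : j ∈ T := T.min'_mem hne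
    have hmT : mT n T = rhoP n (T.erase j) • (Pi.single j 1 : Fin n → F2E n) := by
      rw [mT, dif_pos hne]
    by_cases hji : j = i
    · apply Submodule.mem_sup_right
      apply Submodule.subset_span
      refine ⟨T, ?_⟩
      rw [hmT, hji, hT, Finset.erase_insert hi]
    · have hjS : j ∈ S := by
        rcases Finset.mem_insert.mp hjT with h | h
        · exact absurd h hji
        · exact h
      have hij : i ≠ j := fun h => hji h.symm
      have hiS : i ∉ S.erase j := fun h => hi (Finset.mem_of_mem_erase h)
      have hTe : T.erase j = insert i (S.erase j) := by
        rw [hT, Finset.erase_insert_of_ne hij]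
      have h1 : rhoP n (S.erase j) * rhoE n j = rhoP n S := by
        rw [rhoP, rhoP, Finset.prod_erase_mul _ _ hjS]
      have h2 : rhoP n (T.erase j) = rhoP n (S.erase j) * rhoE n i := by
        rw [hTe, rhoP, rhoP, Finset.prod_insert hiS, mul_comm]
      have hWsum : rhoP n S • (Pi.single i 1 : Fin n → F2E n) + mT n T ∈ Wmod n := by
        have heq : rhoP n S • (Pi.single i 1 : Fin n → F2E n) + mT n T
            = rhoP n (S.erase j) •
              (rhoE n j • (Pi.single i 1 : Fin n → F2E n) +
               rhoE n i • (Pi.single j 1 : Fin n → F2E n)) := by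
          rw [hmT, smul_add, smul_smul, smul_smul, h1, ← h2]
        rw [heq]
        exact Submodule.smul_mem _ _ (swap_mem_W n i j hij)
      have key : rhoP n S • (Pi.single i 1 : Fin n → F2E n)
          = (rhoP n S • (Pi.single i 1 : Fin n → F2E n) + mT n T) + mT n T := by
        rw [add_assoc, F2E.pchar2, add_zero]
      rw [key]
      exact Submodule.add_mem _ (Submodule.mem_sup_left hWsum)
        (Submodule.mem_sup_right (Submodule.subset_span ⟨T, rfl⟩))

lemma pi_single_eq_smul (n : ℕ) (i : Fin n) (r : F2E n) :
    (Pi.single i r : Fin n → F2E n) = r • (Pi.single i 1 : Fin n → F2E n) := by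
  funext j
  by_cases h : j = i <;> simp [h, Pi.single_apply]

/-- Every element lies in `W + span_{F₂} {m_T}`. -/
lemma mem_sup_all (n : ℕ) (f : Fin n → F2E n) :
    f ∈ (Wmod n).restrictScalars (ZMod 2) ⊔ Submodule.span (ZMod 2) (Set.range (mT n)) := by
  set 𝒮 := (Wmod n).restrictScalars (ZMod 2) ⊔ Submodule.span (ZMod 2) (Set.range (mT n))
    with h𝒮
  have hsingle : ∀ (i : Fin n) (r : F2E n), (r • (Pi.single i 1 : Fin n → F2E n)) ∈ 𝒮 := by
    intro i r
    have hr : r = ∑ g ∈ r.coeff.support, (r.coeff g) • (MonoidAlgebra.single g 1 : F2E n) := by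
      conv_lhs => rw [← MonoidAlgebra.sum_coeff_single r]
      rw [Finsupp.sum]
      apply Finset.sum_congr rfl
      intro g _
      rw [MonoidAlgebra.smul_single, smul_eq_mul, mul_one]
    rw [hr, Finset.sum_smul]
    apply Submodule.sum_mem
    intro g _
    rw [smul_assoc]
    apply Submodule.smul_mem
    obtain ⟨Ta, rfl⟩ := gSel_surj n g
    rw [single_expand, Finset.sum_smul]
    exact Submodule.sum_mem _ fun S _ => rhoP_smul_single_mem n S i
  have hf : f = ∑ i, (f i) • (Pi.single i 1 : Fin n → F2E n) := by
    conv_lhs => rw [← Finset.univ_sum_single f]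
    exact Finset.sum_congr rfl fun i _ => pi_single_eq_smul n i (f i)
  rw [hf]
  exact Submodule.sum_mem _ fun i _ => hsingle i (f i)

lemma W_le_ker (n : ℕ) (ψ : (Fin n → F2E n) →ₗ[F2E n] F2E n)
    (hψ : ∀ i : Fin n, ψ (Pi.single i 1) = rhoE n i) :
    Wmod n ≤ LinearMap.ker ψ := by
  rw [Wmod, Submodule.span_le]
  rintro x (⟨i, rfl⟩ | ⟨i, j, hij, rfl⟩)
  · simp only [SetLike.mem_coe, LinearMap.mem_ker, map_smul, hψ, smul_eq_mul]
    exact rho_sq n i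
  · simp only [SetLike.mem_coe, LinearMap.mem_ker, map_add, map_smul, hψ, smul_eq_mul]
    rw [mul_comm]
    exact F2E.char2 n _

lemma psi_mT (n : ℕ) (ψ : (Fin n → F2E n) →ₗ[F2E n] F2E n)
    (hψ : ∀ i : Fin n, ψ (Pi.single i 1) = rhoE n i) (T : Finset (Fin n)) :
    ψ (mT n T) = if T.Nonempty then rhoP n T else 0 := by
  by_cases h : T.Nonempty
  · rw [mT, dif_pos h, if_pos h, map_smul, hψ, smul_eq_mul, rhoP, rhoP,
      Finset.prod_erase_mul _ _ (T.min'_mem h)]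
  · rw [mT, dif_neg h, if_neg h, map_zero]

/-- The `F₂E`-submodule of `ker ψ` generated by the elements `ρᵢaᵢ` (`1 ≤ i ≤ n`) and
`ρⱼaᵢ + ρᵢaⱼ` (`1 ≤ i < j ≤ n`) is all of `ker ψ = Ω²F₂`. -/
theorem stmt_15 (n : ℕ) (ψ : (Fin n → F2E n) →ₗ[F2E n] F2E n)
    (hψ : ∀ i : Fin n, ψ (Pi.single i 1) = rhoE n i) :
    Submodule.span (F2E n)
        ({x : Fin n → F2E n | ∃ i : Fin n, x = rhoE n i • (Pi.single i 1 : Fin n → F2E n)} ∪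
         {x : Fin n → F2E n | ∃ i j : Fin n, i < j ∧
            x = rhoE n j • (Pi.single i 1 : Fin n → F2E n) +
                rhoE n i • (Pi.single j 1 : Fin n → F2E n)}) =
      LinearMap.ker ψ := by
  show Wmod n = LinearMap.ker ψ
  apply le_antisymm (W_le_ker n ψ hψ)
  intro f hf
  have hfker : ψ f = 0 := LinearMap.mem_ker.mp hf
  have hf𝒮 := mem_sup_all n f
  rw [Submodule.mem_sup] at hf𝒮
  obtain ⟨w, hw, g, hg, hfwg⟩ := hf𝒮
  rw [Submodule.mem_span_range_iff_exists_fun] at hg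
  obtain ⟨c, hc⟩ := hg
  rw [Submodule.restrictScalars_mem] at hw
  have hψw : ψ w = 0 := LinearMap.mem_ker.mp (W_le_ker n ψ hψ hw)
  have hψg : ψ g = 0 := by
    have h1 : ψ f = ψ w + ψ g := by rw [← map_add, hfwg]
    rw [hfker, hψw, zero_add] at h1
    exact h1.symm
  have hsum : ∑ T : Finset (Fin n), (if T.Nonempty then c T else 0) • rhoP n T = 0 := by
    have h2 : ψ g = ∑ T : Finset (Fin n), c T • ψ (mT n T) := by
      rw [← hc, map_sum]
      apply Finset.sum_congr rfl
      intro T _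
      exact ψ.map_smul_of_tower (c T) (mT n T)
    rw [← hψg, h2]
    apply Finset.sum_congr rfl
    intro T _
    rw [psi_mT n ψ hψ T]
    by_cases h : T.Nonempty <;> simp [h]
  have hczero := rhoP_indep n _ hsum
  have hg0 : g = 0 := by
    rw [← hc]
    apply Finset.sum_eq_zero
    intro T _
    by_cases h : T.Nonempty
    · have : c T = 0 := by
        have := hczero T
        rwa [if_pos h] at this
      rw [this, zero_smul]
    · rw [mT, dif_neg h, smul_zero]
  rw [← hfwg, hg0, add_zero]
  exact hw
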